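/- Let G be a finite simple graph with m edges, and suppose there is a linear order ≺ on the vertices such that every vertex has at most D neighbors that are larger than it under ≺. Then for every integer k ≥ 2, the number of k-cliques of G is at most m · D^(k−2). -/

import Mathlib

open Classical Finset

/-- If there is a linear order on the vertices of `G` under which every vertex has at most `D`
neighbors larger than it (a `D`-orientation), then for every `k ≥ 2` the number of `k`-cliques
of `G` is at most `m · D^(k−2)`, where `m` is the number of edges of `G`. -/
theorem cliqueCount_le_of_orientation {V : Type*} [Fintype V] [DecidableEq V]
    (G : SimpleGraph V) [DecidableRel G.Adj] (D : ℕ) (L : LinearOrder V)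
    (hL : ∀ v : V, (Finset.univ.filter fun w => G.Adj v w ∧ L.lt v w).card ≤ D) :
    ∀ k : ℕ, 2 ≤ k → (G.cliqueFinset k).card ≤ G.edgeFinset.card * D ^ (k - 2) := by
  letI := L
  -- key step: (k+1)-cliques ≤ D * k-cliques, for k ≥ 1
  have key : ∀ n : ℕ, 1 ≤ n →
      (G.cliqueFinset (n + 1)).card ≤ D * (G.cliqueFinset n).card := by
    intro n hn
    set f : Finset V → Finset V := fun t =>
      if h : t.Nonempty then t.erase (t.max' h) else ∅ with hf
    have hmaps : ∀ t ∈ G.cliqueFinset (n + 1), f t ∈ G.cliqueFinset n := by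
      intro t ht
      rw [SimpleGraph.mem_cliqueFinset_iff, SimpleGraph.isNClique_iff] at ht ⊢
      obtain ⟨hc, hcard⟩ := ht
      have hne : t.Nonempty := by rw [← Finset.card_pos, hcard]; omega
      rw [hf]; simp only [dif_pos hne]
      refine ⟨hc.subset (Finset.erase_subset _ _), ?_⟩
      rw [Finset.card_erase_of_mem (t.max'_mem hne), hcard]; omega
    refine Finset.card_le_mul_card_image_of_maps_to hmaps D ?_
    intro s hs
    rw [SimpleGraph.mem_cliqueFinset_iff, SimpleGraph.isNClique_iff] at hs
    have hsne : s.Nonempty := by rw [← Finset.card_pos, hs.2]; omega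
    set a := s.max' hsne with ha
    -- map each fiber element t to its max, landing in neighbors of a above a
    refine le_trans (Finset.card_le_card_of_injOn
      (fun t => if h : t.Nonempty then t.max' h else a)
      ?_ ?_) (hL a)
    · intro t ht
      simp only [Finset.mem_coe, Finset.mem_filter] at ht ⊢
      obtain ⟨htc, hft⟩ := ht
      rw [SimpleGraph.mem_cliqueFinset_iff, SimpleGraph.isNClique_iff] at htc
      have htne : t.Nonempty := by rw [← Finset.card_pos, htc.2]; omega
      simp only [dif_pos htne]
      set b := t.max' htne with hb
      rw [hf] at hft; simp only [dif_pos htne] at hft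
      have hbt : b ∈ t := t.max'_mem htne
      have hbs : b ∉ s := by rw [← hft]; exact Finset.notMem_erase _ _
      have has : a ∈ s := s.max'_mem hsne
      have hat : a ∈ t := by
        rw [← hft] at has; exact Finset.mem_of_mem_erase has
      have hab : a ≠ b := fun h => hbs (h ▸ has)
      refine ⟨Finset.mem_univ _, htc.1 hat hbt hab, ?_⟩
      exact lt_of_le_of_ne (t.le_max' a hat) hab
    · intro t1 ht1 t2 ht2 heq
      simp only [Finset.mem_coe, Finset.mem_filter] at ht1 ht2
      obtain ⟨ht1c, hft1⟩ := ht1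
      obtain ⟨ht2c, hft2⟩ := ht2
      rw [SimpleGraph.mem_cliqueFinset_iff, SimpleGraph.isNClique_iff] at ht1c ht2c
      have h1ne : t1.Nonempty := by rw [← Finset.card_pos, ht1c.2]; omega
      have h2ne : t2.Nonempty := by rw [← Finset.card_pos, ht2c.2]; omega
      simp only [dif_pos h1ne, dif_pos h2ne] at heq
      rw [hf] at hft1 hft2
      simp only [dif_pos h1ne] at hft1
      simp only [dif_pos h2ne] at hft2
      have : t1 = insert (t1.max' h1ne) s := by
        rw [← hft1, Finset.insert_erase (t1.max'_mem h1ne)]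
      rw [this, heq, ← hft2, Finset.insert_erase (t2.max'_mem h2ne)]
  -- main induction
  intro k hk
  induction k with
  | zero => omega
  | succ n ih =>
    rcases Nat.lt_or_ge n 2 with h2 | h2
    · -- n + 1 = 2, base case
      have hn1 : n = 1 := by omega
      subst hn1
      simp only [Nat.sub_self, pow_zero, mul_one]
      rcases isEmpty_or_nonempty V with hE | hNE
      · have : G.cliqueFinset 2 = ∅ := Finset.eq_empty_of_forall_notMem fun s hs => by
          rw [SimpleGraph.mem_cliqueFinset_iff, SimpleGraph.isNClique_iff] at hs
          have hs2 := hs.2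
          rw [Finset.eq_empty_of_isEmpty s] at hs2
          simp at hs2
        simp [this]
      -- key fact: in a 2-element set, min ≠ max
      have hminmax : ∀ (s : Finset V) (h : s.Nonempty), s.card = 2 →
          s.min' h ≠ s.max' h := by
        intro s h hc hcon
        have : s.card ≤ 1 := Finset.card_le_one.2 fun a ha b hb => by
          have ha' : a = s.min' h :=
            le_antisymm ((s.le_max' a ha).trans hcon.ge) (s.min'_le a ha)
          have hb' : b = s.min' h :=
            le_antisymm ((s.le_max' b hb).trans hcon.ge) (s.min'_le b hb)
          rw [ha', hb']
        omega
      have hrep : ∀ (s : Finset V) (h : s.Nonempty), s.card = 2 →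
          s = {s.min' h, s.max' h} := by
        intro s h hc
        have hsub : ({s.min' h, s.max' h} : Finset V) ⊆ s := by
          intro a ha
          simp only [Finset.mem_insert, Finset.mem_singleton] at ha
          rcases ha with rfl | rfl
          exacts [s.min'_mem h, s.max'_mem h]
        exact (Finset.eq_of_subset_of_card_le hsub
          (by rw [hc, Finset.card_pair (hminmax s h hc)])).symm
      -- inject 2-cliques into edges
      refine Finset.card_le_card_of_injOn
        (fun s => if h : s.Nonempty then s(s.min' h, s.max' h)
          else s(Classical.arbitrary V, Classical.arbitrary V)) ?_ ?_
      · intro s hs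
        rw [Finset.mem_coe, SimpleGraph.mem_cliqueFinset_iff, SimpleGraph.isNClique_iff] at hs
        have hsne : s.Nonempty := by rw [← Finset.card_pos, hs.2]; omega
        simp only [dif_pos hsne, Finset.mem_coe]
        rw [SimpleGraph.mem_edgeFinset]
        exact hs.1 (s.min'_mem hsne) (s.max'_mem hsne) (hminmax s hsne hs.2)
      · intro s1 hs1 s2 hs2 heq
        simp only [Finset.mem_coe, SimpleGraph.mem_cliqueFinset_iff,
          SimpleGraph.isNClique_iff] at hs1 hs2
        have h1ne : s1.Nonempty := by rw [← Finset.card_pos, hs1.2]; omega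
        have h2ne : s2.Nonempty := by rw [← Finset.card_pos, hs2.2]; omega
        simp only [dif_pos h1ne, dif_pos h2ne, Sym2.eq_iff] at heq
        rw [hrep s1 h1ne hs1.2, hrep s2 h2ne hs2.2]
        rcases heq with ⟨ha, hb⟩ | ⟨ha, hb⟩
        · rw [ha, hb]
        · rw [ha, hb, Finset.pair_comm]
    · -- inductive step
      have ihn := ih (by omega)
      calc (G.cliqueFinset (n + 1)).card ≤ D * (G.cliqueFinset n).card := key n (by omega)
        _ ≤ D * (G.edgeFinset.card * D ^ (n - 2)) := Nat.mul_le_mul_left D ihn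
        _ = G.edgeFinset.card * D ^ (n + 1 - 2) := by
            rw [← mul_assoc, mul_comm D, mul_assoc, ← pow_succ']
            congr 2
            omega
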